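/- arXiv:0803.2257 — 7 statements merged into one kernel-verified Lean document; each statement's English description precedes it below -/
import Mathlib

section
/- Welch bound: if Φ = (φ_0, …, φ_{M−1}) is a family of M unit-norm vectors in ℂ^N with N ≤ M, then the coherence μ(Φ) = max_{i ≠ i'} |⟨φ_i, φ_{i'}⟩| satisfies μ(Φ) ≥ √((M−N)/(N(M−1))). -/
open scoped ComplexOrder

open Finset

private lemma welch_sum4 {M N : ℕ} (A : Fin M → Fin M → Fin N → Fin N → ℂ) :
    ∑ j, ∑ k, ∑ i, ∑ i', A i i' j k = ∑ i, ∑ i', ∑ j, ∑ k, A i i' j k := by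
  calc ∑ j, ∑ k, ∑ i, ∑ i', A i i' j k
      = ∑ j, ∑ i, ∑ k, ∑ i', A i i' j k :=
        Finset.sum_congr rfl fun j _ => Finset.sum_comm
    _ = ∑ i, ∑ j, ∑ k, ∑ i', A i i' j k := Finset.sum_comm
    _ = ∑ i, ∑ j, ∑ i', ∑ k, A i i' j k :=
        Finset.sum_congr rfl fun i _ => Finset.sum_congr rfl fun j _ => Finset.sum_comm
    _ = ∑ i, ∑ i', ∑ j, ∑ k, A i i' j k :=
        Finset.sum_congr rfl fun i _ => Finset.sum_comm

/-- Welch bound: `M` unit-norm vectors in `ℂ^N` with `N ≤ M` have coherence at least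
`√((M − N)/(N(M − 1)))`. -/
theorem welch_bound (N M : ℕ) (hN : 1 ≤ N) (hNM : N ≤ M) (hM : 2 ≤ M)
    (φ : Fin M → EuclideanSpace ℂ (Fin N)) (hnorm : ∀ i, ‖φ i‖ = 1) :
    ∃ i i' : Fin M, i ≠ i' ∧
      Real.sqrt (((M : ℝ) - N) / (N * ((M : ℝ) - 1))) ≤ ‖(inner ℂ (φ i) (φ i') : ℂ)‖ := by
  by_contra hcon
  push_neg at hcon
  set c : ℝ := ((M : ℝ) - N) / (N * ((M : ℝ) - 1)) with hcdef
  have hNr : (1:ℝ) ≤ (N:ℝ) := by exact_mod_cast hN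
  have hMr : (2:ℝ) ≤ (M:ℝ) := by exact_mod_cast hM
  have hNMr : (N:ℝ) ≤ (M:ℝ) := by exact_mod_cast hNM
  have hc0 : 0 ≤ c := by
    apply div_nonneg (by linarith)
    apply mul_nonneg (by linarith) (by linarith)
  set f : Fin M → Fin M → ℝ := fun i i' => ‖(inner ℂ (φ i) (φ i') : ℂ)‖ ^ 2 with hf
  set S : ℝ := ∑ i, ∑ i', f i i' with hSdef
  have hinner : ∀ i i', (inner ℂ (φ i) (φ i') : ℂ) = ∑ j, (starRingEnd ℂ) (φ i j) * φ i' j := by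
    intro i i'
    rw [PiLp.inner_apply]
    simp [RCLike.inner_apply, mul_comm]
  have hdiag : ∀ i, (inner ℂ (φ i) (φ i) : ℂ) = 1 := by
    intro i
    rw [inner_self_eq_norm_sq_to_K, hnorm]
    norm_num
  -- Key inequality: M^2 ≤ N * S
  have key : (M:ℝ)^2 ≤ N * S := by
    set T : Fin N → Fin N → ℂ := fun j k => ∑ i, (starRingEnd ℂ) (φ i j) * φ i k with hT
    have htr : ∑ j, T j j = (M:ℂ) := by
      have h1 : ∑ j, T j j = ∑ i, (inner ℂ (φ i) (φ i) : ℂ) := by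
        simp only [hT, hinner]
        exact Finset.sum_comm
      rw [h1]
      simp [hdiag, hnorm]
    have h1 : (M:ℝ) ≤ ∑ j, ‖T j j‖ := by
      calc (M:ℝ) = ‖(M:ℂ)‖ := by simp
        _ = ‖∑ j, T j j‖ := by rw [htr]
        _ ≤ ∑ j, ‖T j j‖ := norm_sum_le _ _
    have h2 : (∑ j, ‖T j j‖)^2 ≤ (N:ℝ) * ∑ j, ‖T j j‖^2 := by
      have := Finset.sum_mul_sq_le_sq_mul_sq Finset.univ (fun _ : Fin N => (1:ℝ))
        (fun j => ‖T j j‖)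
      simpa using this
    have h3 : ∑ j, ‖T j j‖^2 ≤ ∑ j, ∑ k, ‖T j k‖^2 := by
      refine Finset.sum_le_sum fun j _ => ?_
      exact Finset.single_le_sum (f := fun k => ‖T j k‖^2) (fun k _ => sq_nonneg _)
        (Finset.mem_univ j)
    have h4 : ∑ j, ∑ k, ‖T j k‖^2 = S := by
      have hcplx : ∑ j, ∑ k, T j k * (starRingEnd ℂ) (T j k)
          = ∑ i, ∑ i', (inner ℂ (φ i) (φ i') : ℂ) * (starRingEnd ℂ) (inner ℂ (φ i) (φ i')) := by
        have expandT : ∀ j k, T j k * (starRingEnd ℂ) (T j k)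
            = ∑ i, ∑ i', ((starRingEnd ℂ) (φ i j) * φ i k)
                * (φ i' j * (starRingEnd ℂ) (φ i' k)) := by
          intro j k
          have hconj : (starRingEnd ℂ) (T j k) = ∑ i', φ i' j * (starRingEnd ℂ) (φ i' k) := by
            simp [hT, map_sum, map_mul]
          rw [hconj]
          simp only [hT]
          rw [Finset.sum_mul_sum]
        have expandG : ∀ i i', (inner ℂ (φ i) (φ i') : ℂ) * (starRingEnd ℂ) (inner ℂ (φ i) (φ i'))
            = ∑ j, ∑ k, ((starRingEnd ℂ) (φ i j) * φ i' j)
                * (φ i k * (starRingEnd ℂ) (φ i' k)) := by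
          intro i i'
          have hconj : (starRingEnd ℂ) (inner ℂ (φ i) (φ i') : ℂ)
              = ∑ k, φ i k * (starRingEnd ℂ) (φ i' k) := by
            simp [hinner, map_sum, map_mul]
          rw [hconj, hinner]
          rw [Finset.sum_mul_sum]
        simp only [expandT, expandG]
        rw [welch_sum4]
        refine Finset.sum_congr rfl fun i _ => Finset.sum_congr rfl fun i' _ =>
          Finset.sum_congr rfl fun j _ => Finset.sum_congr rfl fun k _ => ?_
        ring
      simp only [Complex.mul_conj] at hcplx
      have : ((∑ j, ∑ k, Complex.normSq (T j k) : ℝ) : ℂ)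
          = ((∑ i, ∑ i', Complex.normSq (inner ℂ (φ i) (φ i') : ℂ) : ℝ) : ℂ) := by
        push_cast
        exact hcplx
      have hre := Complex.ofReal_inj.mp this
      calc ∑ j, ∑ k, ‖T j k‖^2 = ∑ j, ∑ k, Complex.normSq (T j k) := by
            simp [Complex.normSq_eq_norm_sq]
        _ = ∑ i, ∑ i', Complex.normSq (inner ℂ (φ i) (φ i') : ℂ) := hre
        _ = S := by
            simp [hSdef, hf, Complex.normSq_eq_norm_sq]
    calc (M:ℝ)^2 ≤ (∑ j, ‖T j j‖)^2 := by
          have h0 : (0:ℝ) ≤ (M:ℝ) := by positivity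
          exact pow_le_pow_left₀ h0 h1 2
      _ ≤ (N:ℝ) * ∑ j, ‖T j j‖^2 := h2
      _ ≤ (N:ℝ) * ∑ j, ∑ k, ‖T j k‖^2 := by
          exact mul_le_mul_of_nonneg_left h3 (by positivity)
      _ = (N:ℝ) * S := by rw [h4]
  -- Upper bound on S from the contradiction hypothesis
  have hoff : ∀ i i', i ≠ i' → f i i' < c := by
    intro i i' h
    have h1 := hcon i i' h
    have h2 : ‖(inner ℂ (φ i) (φ i') : ℂ)‖ ^ 2 < Real.sqrt c ^ 2 := by
      apply pow_lt_pow_left₀ h1 (norm_nonneg _)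
      norm_num
    rwa [Real.sq_sqrt hc0] at h2
  have hrow : ∀ i : Fin M, ∑ i', f i i' < 1 + ((M:ℝ) - 1) * c := by
    intro i
    rw [← Finset.sum_erase_add _ _ (Finset.mem_univ i)]
    have hne : (Finset.univ.erase i).Nonempty := by
      rw [← Finset.card_pos, Finset.card_erase_of_mem (Finset.mem_univ i), Finset.card_univ,
        Fintype.card_fin]
      omega
    have h2 : ∑ i' ∈ Finset.univ.erase i, f i i' < ∑ _i' ∈ Finset.univ.erase i, c := by
      refine Finset.sum_lt_sum_of_nonempty hne fun j hj => ?_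
      exact hoff i j fun e => (Finset.mem_erase.mp hj).1 e.symm
    rw [Finset.sum_const, Finset.card_erase_of_mem (Finset.mem_univ i), Finset.card_univ,
      Fintype.card_fin, nsmul_eq_mul] at h2
    have hfd : f i i = 1 := by
      show ‖(inner ℂ (φ i) (φ i) : ℂ)‖ ^ 2 = 1
      rw [hdiag i]
      norm_num
    have hcast : ((M - 1 : ℕ) : ℝ) = (M:ℝ) - 1 := by
      have : 1 ≤ M := by omega
      push_cast [this]
      ring
    rw [hcast] at h2
    linarith
  have hS_lt : S < (M:ℝ) * (1 + ((M:ℝ) - 1) * c) := by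
    have h := Finset.sum_lt_sum_of_nonempty (s := (Finset.univ : Finset (Fin M)))
      (f := fun i => ∑ i', f i i') (g := fun _ => 1 + ((M:ℝ) - 1) * c)
      ⟨⟨0, by omega⟩, Finset.mem_univ _⟩ (fun i _ => hrow i)
    simp only [Finset.sum_const, Finset.card_univ, Fintype.card_fin, nsmul_eq_mul] at h
    rw [hSdef]
    exact h
  -- Combine
  have hNne : (N:ℝ) ≠ 0 := by linarith
  have hM1ne : (M:ℝ) - 1 ≠ 0 := by linarith
  have hfinal : (N:ℝ) * ((M:ℝ) * (1 + ((M:ℝ) - 1) * c)) = (M:ℝ)^2 := by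
    rw [hcdef]
    field_simp
    ring
  have : (N:ℝ) * S < (M:ℝ)^2 := by
    calc (N:ℝ) * S < (N:ℝ) * ((M:ℝ) * (1 + ((M:ℝ) - 1) * c)) := by
          apply mul_lt_mul_of_pos_left hS_lt (by linarith)
      _ = (M:ℝ)^2 := hfinal
  linarith
end

section
/- If a dictionary in ℂ^N is the union of two orthonormal bases of ℂ^N, then its coherence is at least 1/√N: there exist i, j with φ_i from the first basis and φ_j from the second such that |⟨φ_i, φ_j⟩| ≥ 1/√N. -/
/-- The union of two orthonormal bases of `ℂ^N` has coherence at least `1/√N`. -/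
theorem two_onb_coherence (N : ℕ) (hN : 1 ≤ N)
    (e f : OrthonormalBasis (Fin N) ℂ (EuclideanSpace ℂ (Fin N))) :
    ∃ i j : Fin N, 1 / Real.sqrt N ≤ ‖(inner ℂ (e i) (f j) : ℂ)‖ := by
  haveI : NeZero N := ⟨by omega⟩
  set x : EuclideanSpace ℂ (Fin N) := e 0
  have hsum : ∑ j : Fin N, ‖(inner ℂ x (f j) : ℂ)‖ ^ 2 = 1 := by
    have h := f.sum_inner_mul_inner x x
    have hx : (inner ℂ x x : ℂ) = 1 := by
      simp [x, inner_self_eq_norm_sq_to_K, e.orthonormal.1 0]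
    rw [hx] at h
    have : ∀ j : Fin N, (inner ℂ x (f j) : ℂ) * inner ℂ (f j) x =
        ((‖(inner ℂ x (f j) : ℂ)‖ ^ 2 : ℝ) : ℂ) := by
      intro j
      have h2 : (inner ℂ (f j) x : ℂ) = starRingEnd ℂ (inner ℂ x (f j)) :=
        (inner_conj_symm (f j) x).symm
      rw [h2, Complex.mul_conj']
      push_cast
      ring
    rw [Finset.sum_congr rfl (fun j _ => this j)] at h
    exact_mod_cast (by push_cast at h ⊢; exact_mod_cast h : (∑ j : Fin N, ‖(inner ℂ x (f j) : ℂ)‖ ^ 2 : ℝ) = 1)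
  -- some term is at least 1/N
  have hNpos : (0:ℝ) < N := by exact_mod_cast hN
  have : ∃ j : Fin N, 1 / N ≤ ‖(inner ℂ x (f j) : ℂ)‖ ^ 2 := by
    by_contra hcon
    push_neg at hcon
    have hlt : (∑ j : Fin N, ‖(inner ℂ x (f j) : ℂ)‖ ^ 2) < ∑ _j : Fin N, (1 / N : ℝ) :=
      Finset.sum_lt_sum_of_nonempty (Finset.univ_nonempty) fun j _ => hcon j
    rw [hsum, Finset.sum_const, Finset.card_univ, Fintype.card_fin, nsmul_eq_mul,
      mul_one_div, div_self (ne_of_gt hNpos)] at hlt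
    exact lt_irrefl _ hlt
  obtain ⟨j, hj⟩ := this
  refine ⟨0, j, ?_⟩
  have h1 : 1 / Real.sqrt N = Real.sqrt (1 / N) := by
    rw [Real.sqrt_div' 1] <;> simp [Real.sqrt_one]
  calc 1 / Real.sqrt N = Real.sqrt (1 / N) := h1
    _ ≤ Real.sqrt (‖(inner ℂ x (f j) : ℂ)‖ ^ 2) := Real.sqrt_le_sqrt hj
    _ = ‖(inner ℂ x (f j) : ℂ)‖ := by rw [Real.sqrt_sq (norm_nonneg _)]
end

section
/- For the Alltop sequence f ∈ ℂ^N with f_n = (1/√N) e^{2πi n³/N} and N ≥ 5 prime, any two atoms from different time-shift blocks satisfy |⟨M^j T^k f, M^{j'} T^{k'} f⟩| = 1/√N whenever k ≠ k' (for all j, j' ∈ ℤ/N). -/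
open Complex Matrix

set_option linter.unusedSectionVars false

section AlltopAux

variable (N : ℕ) [NeZero N]

noncomputable def alltopZet : ℂ := Complex.exp (2 * Real.pi * I / N)

lemma alltopZet_prim : IsPrimitiveRoot (alltopZet N) N :=
  Complex.isPrimitiveRoot_exp N (NeZero.ne N)

lemma alltopZet_ne : alltopZet N ≠ 0 := Complex.exp_ne_zero _

lemma alltopZet_per (a b : ℤ) (h : (a : ZMod N) = b) : alltopZet N ^ a = alltopZet N ^ b := by
  have hd : (N : ℤ) ∣ a - b := by
    have : ((a - b : ℤ) : ZMod N) = 0 := by push_cast [h]; ring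
    exact (ZMod.intCast_zmod_eq_zero_iff_dvd _ _).mp this
  have h1 : alltopZet N ^ (a - b) = 1 := ((alltopZet_prim N).zpow_eq_one_iff_dvd _).mpr hd
  calc alltopZet N ^ a = alltopZet N ^ (b + (a - b)) := by ring_nf
    _ = alltopZet N ^ b * alltopZet N ^ (a - b) := zpow_add₀ (alltopZet_ne N) _ _
    _ = alltopZet N ^ b := by rw [h1, mul_one]

lemma alltopZet_sum (c : ℤ) (hc : (c : ZMod N) ≠ 0) :
    ∑ m : Fin N, alltopZet N ^ (c * (m.val : ℤ)) = 0 := by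
  have hz : ∀ m : Fin N, alltopZet N ^ (c * (m.val : ℤ)) = (alltopZet N ^ c) ^ (m.val) := by
    intro m; rw [_root_.zpow_mul, zpow_natCast]
  simp only [hz]
  rw [Fin.sum_univ_eq_sum_range (fun i => (alltopZet N ^ c) ^ i) N]
  have hne1 : alltopZet N ^ c ≠ 1 := by
    intro h
    exact hc (((ZMod.intCast_zmod_eq_zero_iff_dvd _ _).mpr
      (((alltopZet_prim N).zpow_eq_one_iff_dvd c).mp h)))
  rw [geom_sum_eq hne1]
  have : (alltopZet N ^ c) ^ N = 1 := by
    rw [← zpow_natCast, ← _root_.zpow_mul, mul_comm, _root_.zpow_mul, zpow_natCast,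
      (alltopZet_prim N).pow_eq_one, _root_.one_zpow]
  rw [this, sub_self, zero_div]

lemma alltopZet_norm : ‖alltopZet N‖ = 1 :=
  Complex.norm_eq_one_of_pow_eq_one (alltopZet_prim N).pow_eq_one (NeZero.ne N)

lemma alltopZet_conj (t : ℤ) :
    (starRingEnd ℂ) (alltopZet N ^ t) = alltopZet N ^ (-t) := by
  rw [map_zpow₀, _root_.zpow_neg, ← _root_.inv_zpow]
  congr 1
  exact (Complex.inv_eq_conj (alltopZet_norm N)).symm

lemma alltop_cast_add_fin (a b : Fin N) :
    ((((a + b).val : ℤ)) : ZMod N) = (a.val : ℤ) + (b.val : ℤ) := by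
  have : (a + b).val = (a.val + b.val) % N := by rw [Fin.add_def]
  rw [this]
  push_cast [ZMod.natCast_mod]
  ring

lemma alltop_cast_sub_fin (a b : Fin N) :
    ((((a - b).val : ℤ)) : ZMod N) = (a.val : ℤ) - (b.val : ℤ) := by
  have h := alltop_cast_add_fin N (a - b) b
  rw [sub_add_cancel] at h
  linear_combination -h

lemma alltop_fin_val_zero (d : Fin N) (h : (((d.val : ℤ)) : ZMod N) = 0) : d = 0 := by
  have h2 : ((d.val : ℕ) : ZMod N) = 0 := by exact_mod_cast h
  have h3 := ZMod.val_cast_of_lt (n := N) d.isLt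
  rw [h2, ZMod.val_zero] at h3
  exact Fin.ext h3.symm

lemma alltop_quad_sum (hp : N.Prime) (A B : ℤ) (h2A : (((2 * A : ℤ)) : ZMod N) ≠ 0) :
    ‖∑ n : Fin N, alltopZet N ^ (A * (n.val : ℤ) ^ 2 + B * (n.val : ℤ))‖ = Real.sqrt N := by
  haveI : Fact N.Prime := ⟨hp⟩
  set P : Fin N → ℤ := fun n => A * (n.val : ℤ) ^ 2 + B * (n.val : ℤ) with hP
  set S : ℂ := ∑ n : Fin N, alltopZet N ^ P n with hS
  have key : S * (starRingEnd ℂ) S = N := by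
    rw [hS, map_sum]
    simp only [alltopZet_conj]
    rw [Finset.sum_mul_sum]
    have step1 : ∀ n m : Fin N,
        alltopZet N ^ P n * alltopZet N ^ (-P m) = alltopZet N ^ (P n - P m) := by
      intro n m; rw [← zpow_add₀ (alltopZet_ne N)]; ring_nf
    simp only [step1]
    rw [Finset.sum_comm]
    have step2 : ∀ m : Fin N, ∑ n : Fin N, alltopZet N ^ (P n - P m)
        = ∑ d : Fin N, alltopZet N ^ (A * (d.val:ℤ)^2 + B * d.val)
            * alltopZet N ^ ((2*A*(d.val:ℤ)) * (m.val:ℤ)) := by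
      intro m
      rw [← Fintype.sum_equiv (Equiv.addRight m)
        (fun d => alltopZet N ^ (A * (d.val:ℤ)^2 + B * d.val)
            * alltopZet N ^ ((2*A*(d.val:ℤ)) * (m.val:ℤ)))
        (fun n => alltopZet N ^ (P n - P m)) ?_]
      intro d
      show alltopZet N ^ (A * (d.val:ℤ)^2 + B * d.val)
            * alltopZet N ^ ((2*A*(d.val:ℤ)) * (m.val:ℤ))
          = alltopZet N ^ (P (d + m) - P m)
      rw [← zpow_add₀ (alltopZet_ne N)]
      apply alltopZet_per
      have h1 := alltop_cast_add_fin N d m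
      push_cast [hP]
      push_cast at h1
      rw [h1]
      ring
    simp only [step2]
    rw [Finset.sum_comm]
    have step3 : ∀ d : Fin N,
        ∑ m : Fin N, alltopZet N ^ (A * (d.val:ℤ)^2 + B * d.val)
            * alltopZet N ^ ((2*A*(d.val:ℤ)) * (m.val:ℤ))
        = if d = 0 then (N : ℂ) else 0 := by
      intro d
      rw [← Finset.mul_sum]
      by_cases hd : d = 0
      · subst hd
        simp only [if_pos rfl]
        have : ∀ m : Fin N,
            alltopZet N ^ ((2*A*(((0:Fin N).val:ℤ))) * (m.val:ℤ)) = 1 := by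
          intro m; norm_num
        simp only [this]
        norm_num
      · rw [if_neg hd]
        have hc : (((2*A*(d.val:ℤ)) : ℤ) : ZMod N) ≠ 0 := by
          push_cast
          intro h
          rcases mul_eq_zero.mp h with h' | h'
          · exact h2A (by push_cast; exact_mod_cast h')
          · exact hd (alltop_fin_val_zero N d (by exact_mod_cast h'))
        rw [alltopZet_sum N _ hc, mul_zero]
    simp only [step3]
    simp
  have hnsq : Complex.normSq S = N := by
    rw [Complex.mul_conj] at key
    exact_mod_cast key
  rw [Complex.norm_def, hnsq]

lemma alltop_Tshift_mulVec (T : Matrix (Fin N) (Fin N) ℂ)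
    (hT : T = fun i j => if i = j + 1 then 1 else 0) (v : Fin N → ℂ) (i : Fin N) :
    (T *ᵥ v) i = v (i - 1) := by
  subst hT
  simp only [Matrix.mulVec, dotProduct]
  have h : ∀ j : Fin N, (if i = j + 1 then (1:ℂ) else 0) * v j
      = if j = i - 1 then v j else 0 := by
    intro jj
    by_cases h : jj = i - 1
    · subst h
      rw [if_pos rfl, sub_add_cancel, if_pos rfl, one_mul]
    · rw [if_neg h, if_neg, zero_mul]
      intro hh
      exact h (by rw [hh, add_sub_cancel_right])
  simp only [h]
  simp

open Fin.NatCast in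
lemma alltop_Tpow_mulVec (T : Matrix (Fin N) (Fin N) ℂ)
    (hT : T = fun i j => if i = j + 1 then 1 else 0) (kk : ℕ) (v : Fin N → ℂ) (i : Fin N) :
    ((T ^ kk) *ᵥ v) i = v (i - (kk : Fin N)) := by
  induction kk generalizing v i with
  | zero => simp
  | succ n ih =>
    rw [pow_succ, ← Matrix.mulVec_mulVec, ih (T *ᵥ v) i,
      alltop_Tshift_mulVec N T hT v (i - (n : Fin N))]
    congr 1
    push_cast
    rw [sub_sub]

open Fin.NatCast in
lemma alltop_atom_apply (T : Matrix (Fin N) (Fin N) ℂ)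
    (hT : T = fun i j => if i = j + 1 then 1 else 0)
    (M : Matrix (Fin N) (Fin N) ℂ)
    (hM : M = Matrix.diagonal fun m : Fin N =>
      Complex.exp (2 * Real.pi * Complex.I * (m : ℕ) / N))
    (v : Fin N → ℂ) (jn kn : ℕ) (n : Fin N) :
    ((M ^ jn * T ^ kn) *ᵥ v) n
      = (Complex.exp (2 * Real.pi * Complex.I * (n : ℕ) / N)) ^ jn
          * v (n - (kn : Fin N)) := by
  rw [← Matrix.mulVec_mulVec, hM, Matrix.diagonal_pow, Matrix.mulVec_diagonal,
    Pi.pow_apply, alltop_Tpow_mulVec N T hT]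

lemma alltop_exp_eq (m : ℕ) :
    Complex.exp (2 * Real.pi * Complex.I * m / N) = alltopZet N ^ (m : ℤ) := by
  rw [alltopZet, zpow_natCast, ← Complex.exp_nat_mul]
  congr 1
  ring

lemma alltop_collapse (z : ℂ) (hz : z ≠ 0) (a b : ℤ) (jn : ℕ) (w : ℂ) :
    (z ^ a) ^ jn * (w * z ^ b) = w * z ^ (a * jn + b) := by
  rw [← zpow_natCast (z ^ a) jn, ← _root_.zpow_mul, zpow_add₀ hz]
  ring

end AlltopAux

/-- For the Alltop sequence with `N ≥ 5` prime, atoms from different time-shift blocks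
have inner product of modulus `1/√N`. -/
theorem alltop_cross_block_coherence (N : ℕ) [NeZero N] (hp : N.Prime) (hN : 5 ≤ N)
    (T : Matrix (Fin N) (Fin N) ℂ)
    (hT : T = fun i j => if i = j + 1 then 1 else 0)
    (M : Matrix (Fin N) (Fin N) ℂ)
    (hM : M = Matrix.diagonal fun m : Fin N =>
      Complex.exp (2 * Real.pi * Complex.I * (m : ℕ) / N))
    (f : EuclideanSpace ℂ (Fin N))
    (hf : f = fun n : Fin N => (1 / Real.sqrt N : ℝ) *
      Complex.exp (2 * Real.pi * Complex.I * ((n : ℕ) ^ 3) / N))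
    (j j' k k' : Fin N) (hkk' : k ≠ k') :
    ‖(inner ℂ
        (show EuclideanSpace ℂ (Fin N) from WithLp.toLp 2 ((M ^ (j : ℕ) * T ^ (k : ℕ)).mulVec f))
        (show EuclideanSpace ℂ (Fin N) from WithLp.toLp 2 ((M ^ (j' : ℕ) * T ^ (k' : ℕ)).mulVec f)) : ℂ)‖ =
      1 / Real.sqrt N := by
  haveI : Fact N.Prime := ⟨hp⟩
  set c : ℝ := 1 / Real.sqrt N with hc
  -- entry formulas
  have hfe : ∀ m : Fin N, f m = (c : ℂ) * alltopZet N ^ ((m.val ^ 3 : ℕ) : ℤ) := by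
    intro m
    rw [hf]
    have h := alltop_exp_eq N (m.val ^ 3)
    push_cast at h ⊢
    rw [h]
  set t1 : Fin N → ℤ := fun n => (n.val : ℤ) * (j.val : ℤ) + ((n - k).val : ℤ) ^ 3 with ht1
  set t2 : Fin N → ℤ := fun n => (n.val : ℤ) * (j'.val : ℤ) + ((n - k').val : ℤ) ^ 3 with ht2
  have hatom : ∀ n : Fin N, ((M ^ (j : ℕ) * T ^ (k : ℕ)) *ᵥ f) n = (c : ℂ) * alltopZet N ^ t1 n := by
    intro n
    rw [alltop_atom_apply N T hT M hM f j.val k.val n, Fin.cast_val_eq_self, hfe,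
      alltop_exp_eq N n.val]
    rw [alltop_collapse _ (alltopZet_ne N)]
    simp only [ht1]
    congr 1
  have hatom' : ∀ n : Fin N, ((M ^ (j' : ℕ) * T ^ (k' : ℕ)) *ᵥ f) n = (c : ℂ) * alltopZet N ^ t2 n := by
    intro n
    rw [alltop_atom_apply N T hT M hM f j'.val k'.val n, Fin.cast_val_eq_self, hfe,
      alltop_exp_eq N n.val]
    rw [alltop_collapse _ (alltopZet_ne N)]
    simp only [ht2]
    congr 1
  set A : ℤ := 3 * ((k.val : ℤ) - (k'.val : ℤ)) with hA
  set B : ℤ := ((j'.val : ℤ) - (j.val : ℤ)) + 3 * ((k'.val : ℤ) ^ 2 - (k.val : ℤ) ^ 2) with hB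
  set C : ℤ := (k.val : ℤ) ^ 3 - (k'.val : ℤ) ^ 3 with hC
  have hinner : (inner ℂ
        (show EuclideanSpace ℂ (Fin N) from WithLp.toLp 2 ((M ^ (j : ℕ) * T ^ (k : ℕ)).mulVec f))
        (show EuclideanSpace ℂ (Fin N) from WithLp.toLp 2 ((M ^ (j' : ℕ) * T ^ (k' : ℕ)).mulVec f)) : ℂ)
      = ((c : ℂ) * c) * (alltopZet N ^ C *
          ∑ n : Fin N, alltopZet N ^ (A * (n.val : ℤ) ^ 2 + B * (n.val : ℤ))) := by
    rw [PiLp.inner_apply]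
    have hterm : ∀ n : Fin N,
        (inner ℂ (((M ^ (j : ℕ) * T ^ (k : ℕ)) *ᵥ f) n) (((M ^ (j' : ℕ) * T ^ (k' : ℕ)) *ᵥ f) n) : ℂ)
          = ((c : ℂ) * c) * (alltopZet N ^ C * alltopZet N ^ (A * (n.val : ℤ) ^ 2 + B * (n.val : ℤ))) := by
      intro n
      rw [RCLike.inner_apply, hatom n, hatom' n, _root_.map_mul, Complex.conj_ofReal,
        alltopZet_conj]
      have hexp : alltopZet N ^ (-t1 n) * alltopZet N ^ t2 n
          = alltopZet N ^ C * alltopZet N ^ (A * (n.val : ℤ) ^ 2 + B * (n.val : ℤ)) := by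
        rw [← zpow_add₀ (alltopZet_ne N), ← zpow_add₀ (alltopZet_ne N)]
        apply alltopZet_per
        have hs1 := alltop_cast_sub_fin N n k
        have hs2 := alltop_cast_sub_fin N n k'
        push_cast [ht1, ht2, hA, hB, hC]
        push_cast at hs1 hs2
        rw [hs1, hs2]
        ring
      rw [← hexp]
      ring
    rw [Finset.sum_congr rfl (fun n _ => hterm n), ← Finset.mul_sum, ← Finset.mul_sum]
  rw [hinner]
  have h2A : (((2 * A : ℤ)) : ZMod N) ≠ 0 := by
    have h6 : ((6 : ℤ) : ZMod N) ≠ 0 := by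
      rw [Ne, ZMod.intCast_zmod_eq_zero_iff_dvd]
      intro hdvd
      have hdvd' : N ∣ 6 := by exact_mod_cast hdvd
      have hle : N ≤ 6 := Nat.le_of_dvd (by norm_num) hdvd'
      have h56 : N = 5 ∨ N = 6 := by omega
      rcases h56 with h5 | h6
      · rw [h5] at hdvd'; norm_num at hdvd'
      · rw [h6] at hp; norm_num at hp
    have hkk : (((k.val : ℤ) - (k'.val : ℤ)) : ZMod N) ≠ 0 := by
      intro h
      apply hkk'
      have : ((k.val : ℕ) : ZMod N) = ((k'.val : ℕ) : ZMod N) := by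
        push_cast at h
        rw [sub_eq_zero] at h
        exact_mod_cast h
      have hval : k.val = k'.val := by
        have h1 := ZMod.val_cast_of_lt (n := N) k.isLt
        have h2 := ZMod.val_cast_of_lt (n := N) k'.isLt
        rw [← h1, ← h2, this]
      exact Fin.ext hval
    have : ((2 * A : ℤ) : ZMod N) = ((6:ℤ) : ZMod N) * (((k.val : ℤ) - (k'.val : ℤ)) : ZMod N) := by
      push_cast [hA]
      ring
    rw [this]
    exact mul_ne_zero h6 hkk
  have hsum := alltop_quad_sum N hp A B h2A
  have hζC : ‖alltopZet N ^ C‖ = 1 := by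
    rw [norm_zpow, alltopZet_norm, _root_.one_zpow]
  rw [norm_mul, norm_mul, norm_mul, hζC, hsum, one_mul, Complex.norm_real,
    Real.norm_eq_abs]
  have hN0 : (0:ℝ) < N := by
    have h1 : 0 < N := hp.pos
    positivity
  have hcpos : (0:ℝ) ≤ c := by rw [hc]; positivity
  rw [_root_.abs_of_nonneg hcpos, hc]
  have hs : Real.sqrt N ≠ 0 := by positivity
  field_simp
end

section
/- The Gabor dictionary Φ_A generated by the Alltop sequence, consisting of the N² atoms M^j T^k f for j,k ∈ ℤ/N with f_n = (1/√N) e^{2πi n³/N} and N ≥ 5 prime, has coherence exactly 1/√N: distinct atoms within the same time-shift block are orthogonal, and atoms from distinct blocks have inner product of modulus 1/√N. -/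
open Complex Matrix

set_option linter.unusedSectionVars false

section AlltopAux

open Finset

variable {N : ℕ} [NeZero N]

local notation "ψ" => ZMod.stdAddChar (N := N)

lemma alltop_psi_natCast (m : ℕ) :
    ψ ((m : ZMod N)) = Complex.exp (2 * Real.pi * Complex.I * m / N) := by
  have := ZMod.stdAddChar_coe (N := N) (m : ℤ)
  push_cast at this
  simpa using this

lemma alltop_norm_psi (x : ZMod N) : ‖ψ x‖ = 1 := by
  rw [ZMod.stdAddChar_apply, Circle.norm_coe]

lemma alltop_conj_psi (x : ZMod N) : (starRingEnd ℂ) (ψ x) = ψ (-x) := by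
  rw [ZMod.stdAddChar_apply, ZMod.stdAddChar_apply, AddChar.map_neg_eq_inv,
    Circle.coe_inv_eq_conj]

lemma alltop_sum_psi_mul (b : ZMod N) :
    ∑ x : ZMod N, ψ (x * b) = if b = 0 then (N : ℂ) else 0 := by
  have := AddChar.sum_mulShift b (ZMod.isPrimitive_stdAddChar N)
  simpa [ZMod.card] using this

lemma alltop_iota_sub (x y : Fin N) :
    (((x - y).val : ℕ) : ZMod N) = ((x.val : ℕ) : ZMod N) - ((y.val : ℕ) : ZMod N) := by
  rw [Fin.sub_def]
  simp only [ZMod.natCast_mod]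
  push_cast [Nat.cast_sub (le_of_lt y.isLt)]
  simp [ZMod.natCast_self]
  ring

lemma alltop_quad_sum_mul_conj (hp : N.Prime) (hN : 5 ≤ N) (a b : ZMod N) (ha : a ≠ 0) :
    (∑ x : ZMod N, ψ (a * x ^ 2 + b * x)) *
      (starRingEnd ℂ) (∑ x : ZMod N, ψ (a * x ^ 2 + b * x)) = N := by
  haveI : Fact N.Prime := ⟨hp⟩
  have h2 : (2 : ZMod N) ≠ 0 := by
    have hnd : ¬ (N ∣ 2) := fun h => by have := Nat.le_of_dvd (by norm_num) h; omega
    exact_mod_cast (show ((2 : ℕ) : ZMod N) ≠ 0 by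
      rw [Ne, ZMod.natCast_eq_zero_iff]; exact hnd)
  rw [map_sum]
  simp only [alltop_conj_psi]
  rw [Finset.sum_mul_sum]
  have key : ∀ x : ZMod N, ∑ y : ZMod N,
      ψ (a * x ^ 2 + b * x) * ψ (-(a * y ^ 2 + b * y))
      = ∑ h : ZMod N, ψ (x * (-(2 * a * h))) * ψ (-(a * h ^ 2 + b * h)) := by
    intro x
    refine (Fintype.sum_equiv (Equiv.addLeft x) _ _ fun h => ?_).symm
    rw [← AddChar.map_add_eq_mul, ← AddChar.map_add_eq_mul]
    congr 1
    simp only [Equiv.coe_addLeft]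
    ring
  simp only [key]
  rw [Finset.sum_comm]
  have key2 : ∀ h : ZMod N,
      ∑ x : ZMod N, ψ (x * (-(2 * a * h))) * ψ (-(a * h ^ 2 + b * h))
      = (if -(2 * a * h) = 0 then (N : ℂ) else 0) * ψ (-(a * h ^ 2 + b * h)) := by
    intro h
    rw [← Finset.sum_mul, alltop_sum_psi_mul]
  simp only [key2]
  rw [Finset.sum_eq_single 0]
  · simp
  · intro h _ hh
    have hne : -(2 * a * h) ≠ 0 := by
      simp only [neg_ne_zero]
      exact mul_ne_zero (mul_ne_zero h2 ha) hh
    rw [if_neg hne, zero_mul]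
  · simp

lemma alltop_shift_mulVec (T : Matrix (Fin N) (Fin N) ℂ)
    (hT : T = fun i j => if i = j + 1 then 1 else 0) (v : Fin N → ℂ) (i : Fin N) :
    T.mulVec v i = v (i - 1) := by
  subst hT
  simp only [Matrix.mulVec, dotProduct]
  have : ∀ j : Fin N, (if i = j + 1 then (1 : ℂ) else 0) * v j
      = if j = i - 1 then v j else 0 := by
    intro j
    by_cases h : j = i - 1
    · subst h
      rw [if_pos rfl, if_pos (by rw [sub_add_cancel]), one_mul]
    · rw [if_neg h, if_neg, zero_mul]
      intro hc
      exact h (by rw [hc, add_sub_cancel_right])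
  simp_rw [this]
  rw [Finset.sum_ite_eq' Finset.univ, if_pos (Finset.mem_univ _)]

open Fin.NatCast in
lemma alltop_shift_pow_mulVec (T : Matrix (Fin N) (Fin N) ℂ)
    (hT : T = fun i j => if i = j + 1 then 1 else 0) (k : ℕ) (v : Fin N → ℂ) (i : Fin N) :
    (T ^ k).mulVec v i = v (i - (k : Fin N)) := by
  induction k generalizing v i with
  | zero => simp [Matrix.one_mulVec]
  | succ k ih =>
    rw [pow_succ, ← Matrix.mulVec_mulVec, ih, alltop_shift_mulVec T hT]
    congr 1
    push_cast
    open Fin.CommRing in ring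

end AlltopAux

/-- The Alltop Gabor dictionary has coherence exactly `1/√N`: distinct atoms in the same
time-shift block are orthogonal, and atoms from different blocks have inner product of
modulus `1/√N`. -/
theorem alltop_gabor_coherence (N : ℕ) [NeZero N] (hp : N.Prime) (hN : 5 ≤ N)
    (T : Matrix (Fin N) (Fin N) ℂ)
    (hT : T = fun i j => if i = j + 1 then 1 else 0)
    (M : Matrix (Fin N) (Fin N) ℂ)
    (hM : M = Matrix.diagonal fun m : Fin N =>
      Complex.exp (2 * Real.pi * Complex.I * (m : ℕ) / N))
    (f : EuclideanSpace ℂ (Fin N))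
    (hf : f = fun n : Fin N => (1 / Real.sqrt N : ℝ) *
      Complex.exp (2 * Real.pi * Complex.I * ((n : ℕ) ^ 3) / N))
    (φ : Fin N × Fin N → EuclideanSpace ℂ (Fin N))
    (hφ : φ = fun p => show EuclideanSpace ℂ (Fin N) from
      WithLp.toLp 2 ((M ^ (p.1 : ℕ) * T ^ (p.2 : ℕ)).mulVec f)) :
    (∀ j j' k : Fin N, j ≠ j' → (inner ℂ (φ (j, k)) (φ (j', k)) : ℂ) = 0) ∧
      (∀ j j' k k' : Fin N, k ≠ k' →
        ‖(inner ℂ (φ (j, k)) (φ (j', k')) : ℂ)‖ = 1 / Real.sqrt N) := by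
  haveI : Fact N.Prime := ⟨hp⟩
  set c : ℝ := 1 / Real.sqrt N with hc
  set ι : Fin N → ZMod N := fun i => ((i.val : ℕ) : ZMod N) with hιdef
  have hι : Function.Injective ι := by
    intro x y h
    have h2 : (ι x).val = (ι y).val := by rw [h]
    simp only [hιdef, ZMod.val_natCast, Nat.mod_eq_of_lt x.isLt,
      Nat.mod_eq_of_lt y.isLt] at h2
    exact Fin.ext h2
  have hιb : Function.Bijective ι :=
    (Fintype.bijective_iff_injective_and_card ι).mpr ⟨hι, by simp [ZMod.card]⟩
  have hatom : ∀ (j k i : Fin N),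
      φ (j, k) i = (c : ℂ) * ZMod.stdAddChar (ι i * ι j + (ι i - ι k) ^ 3) := by
    intro j k i
    have h1 : φ (j, k) i = (M ^ (j : ℕ)).mulVec ((T ^ (k : ℕ)).mulVec f) i := by
      rw [hφ]
      simp [Matrix.mulVec_mulVec]
    rw [h1, hM, Matrix.diagonal_pow, Matrix.mulVec_diagonal,
      alltop_shift_pow_mulVec T hT, Fin.cast_val_eq_self, hf]
    simp only [Pi.pow_apply]
    have e1 : Complex.exp (2 * Real.pi * Complex.I * (i : ℕ) / N) ^ (j : ℕ)
        = ZMod.stdAddChar (ι i * ι j) := by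
      rw [← alltop_psi_natCast, ← AddChar.map_nsmul_eq_pow, nsmul_eq_mul]
      congr 1
      simp only [hιdef]
      ring
    have e2 : Complex.exp (2 * Real.pi * Complex.I * ((↑(i - k) : ℕ) ^ 3 : ℂ) / N)
        = ZMod.stdAddChar ((ι i - ι k) ^ 3) := by
      rw [show ((↑(i - k) : ℕ) ^ 3 : ℂ) = (((↑(i - k) ^ 3 : ℕ) : ℂ)) by push_cast; ring,
        ← alltop_psi_natCast]
      congr 1
      push_cast [hιdef, alltop_iota_sub]
      ring
    rw [e1, e2, AddChar.map_add_eq_mul]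
    ring
  have hinner : ∀ j k j' k' : Fin N, (inner ℂ (φ (j, k)) (φ (j', k')) : ℂ)
      = (c : ℂ) ^ 2 * ∑ x : ZMod N,
          ZMod.stdAddChar (-(x * ι j + (x - ι k) ^ 3) + (x * ι j' + (x - ι k') ^ 3)) := by
    intro j k j' k'
    rw [PiLp.inner_apply]
    have step : ∀ i : Fin N, (inner ℂ (φ (j, k) i) (φ (j', k') i) : ℂ)
        = (c : ℂ) ^ 2 * ZMod.stdAddChar
            (-(ι i * ι j + (ι i - ι k) ^ 3) + (ι i * ι j' + (ι i - ι k') ^ 3)) := by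
      intro i
      rw [RCLike.inner_apply, hatom, hatom, _root_.map_mul, Complex.conj_ofReal, alltop_conj_psi,
        AddChar.map_add_eq_mul (ZMod.stdAddChar (N := N))
          (-(ι i * ι j + (ι i - ι k) ^ 3)) (ι i * ι j' + (ι i - ι k') ^ 3)]
      ring
    simp_rw [step]
    rw [← Finset.mul_sum]
    congr 1
    exact hιb.sum_comp
      (fun x => ZMod.stdAddChar (-(x * ι j + (x - ι k) ^ 3) + (x * ι j' + (x - ι k') ^ 3)))
  constructor
  · intro j j' k hjj
    rw [hinner]
    have hre : ∑ x : ZMod N,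
        ZMod.stdAddChar (-(x * ι j + (x - ι k) ^ 3) + (x * ι j' + (x - ι k) ^ 3))
        = ∑ x : ZMod N, ZMod.stdAddChar (x * (ι j' - ι j)) := by
      refine Finset.sum_congr rfl fun x _ => ?_
      congr 1
      ring
    rw [hre, alltop_sum_psi_mul, if_neg, mul_zero]
    exact sub_ne_zero.mpr fun h => hjj (hι h).symm
  · intro j j' k k' hkk
    rw [hinner]
    have h3 : (3 : ZMod N) ≠ 0 := by
      have hnd : ¬ (N ∣ 3) := fun h => by have := Nat.le_of_dvd (by norm_num) h; omega
      exact_mod_cast (show ((3 : ℕ) : ZMod N) ≠ 0 by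
        rw [Ne, ZMod.natCast_eq_zero_iff]; exact hnd)
    have ha : (3 : ZMod N) * (ι k - ι k') ≠ 0 :=
      mul_ne_zero h3 (sub_ne_zero.mpr fun h => hkk (hι h))
    have ha : (3 : ZMod N) * (ι k - ι k') ≠ 0 :=
      mul_ne_zero h3 (sub_ne_zero.mpr fun h => hkk (hι h))
    set S : ℂ := ∑ x : ZMod N,
      ZMod.stdAddChar ((3 : ZMod N) * (ι k - ι k') * x ^ 2
        + (ι j' - ι j + 3 * ι k' ^ 2 - 3 * ι k ^ 2) * x) with hS
    have hre : ∑ x : ZMod N,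
        ZMod.stdAddChar (-(x * ι j + (x - ι k) ^ 3) + (x * ι j' + (x - ι k') ^ 3))
        = S * ZMod.stdAddChar (ι k ^ 3 - ι k' ^ 3) := by
      rw [hS, Finset.sum_mul]
      refine Finset.sum_congr rfl fun x _ => ?_
      rw [← AddChar.map_add_eq_mul]
      congr 1
      ring
    rw [hre]
    have hSN : S * (starRingEnd ℂ) S = N :=
      alltop_quad_sum_mul_conj hp hN _ _ ha
    have hnormS : ‖S‖ = Real.sqrt N := by
      have h1 : (Complex.normSq S : ℂ) = N := by rw [← Complex.mul_conj]; exact hSN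
      have h2 : Complex.normSq S = N := by exact_mod_cast h1
      rw [Complex.norm_def, h2]
    have hNpos : (0 : ℝ) < N := by
      have h5 : 0 < N := Nat.lt_of_lt_of_le (by norm_num) hN
      exact_mod_cast h5
    have hs : (0 : ℝ) < Real.sqrt N := Real.sqrt_pos.mpr hNpos
    have hc0 : 0 ≤ c := by rw [hc]; positivity
    rw [norm_mul, norm_mul, hnormS, alltop_norm_psi, norm_pow, Complex.norm_real,
      Real.norm_eq_abs, _root_.abs_of_nonneg hc0, mul_one]
    have hcs : c * Real.sqrt N = 1 := by
      rw [hc]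
      field_simp
    rw [pow_two, mul_assoc, hcs, mul_one]
end

section
/- For N ≥ 5 prime and the Alltop sequence f_n = (1/√N) e^{2πi n³/N}, for any nonzero cyclic shift k ≢ 0 (mod N) and any j ∈ ℤ/N, the inner product ⟨f, M^j T^k f⟩ = (1/N) Σ_{n=0}^{N−1} e^{2πi(n³ − (n−k)³ − jn)/N} has modulus 1/√N (a normalized quadratic Gauss sum). -/
open Complex Matrix

section Aux
open ZMod AddChar
open Fin.NatCast

lemma conj_stdAddChar' {N : ℕ} [NeZero N] (z : ZMod N) :
    (starRingEnd ℂ) (stdAddChar z) = stdAddChar (-z) := by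
  have h1 : stdAddChar (-z) * stdAddChar z = 1 := by
    rw [← AddChar.map_add_eq_mul]; simp
  have h2 : (starRingEnd ℂ) (stdAddChar z) * stdAddChar z = 1 := by
    rw [← Complex.normSq_eq_conj_mul_self, stdAddChar_apply]
    simp [Complex.normSq_eq_norm_sq, Circle.norm_coe]
  have hne : (stdAddChar z : ℂ) ≠ 0 := by
    intro h; rw [h, mul_zero] at h1; exact one_ne_zero h1.symm
  exact mul_right_cancel₀ hne (h2.trans h1.symm)

lemma gauss_abs' {N : ℕ} [NeZero N] (hp : N.Prime) (hN : 5 ≤ N) (a b c : ZMod N)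
    (ha : a ≠ 0) :
    ‖∑ x : ZMod N, stdAddChar (a * x ^ 2 + b * x + c)‖ = Real.sqrt N := by
  haveI : Fact N.Prime := ⟨hp⟩
  set ψ : AddChar (ZMod N) ℂ := stdAddChar with hψ
  set q : ZMod N → ZMod N := fun x => a * x ^ 2 + b * x + c with hq
  set S := ∑ x : ZMod N, ψ (q x) with hS
  have h2 : (2 : ZMod N) ≠ 0 := by
    intro h
    have h2' : N ∣ 2 := by
      rwa [show (2 : ZMod N) = ((2 : ℕ) : ZMod N) by push_cast; rfl,
        ZMod.natCast_eq_zero_iff] at h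
    have := Nat.le_of_dvd (by norm_num) h2'
    omega
  have key : S * (starRingEnd ℂ) S = (N : ℂ) := by
    have hc : ∀ z : ZMod N, (starRingEnd ℂ) (ψ z) = ψ (-z) := fun z => conj_stdAddChar' z
    rw [hS, map_sum]
    simp_rw [hc]
    rw [Finset.mul_sum]
    calc (∑ m : ZMod N, (∑ n : ZMod N, ψ (q n)) * ψ (-q m))
        = ∑ m : ZMod N, ∑ d : ZMod N, ψ (a * d ^ 2 + b * d) * ψ (m * (2 * a * d)) := by
          refine Finset.sum_congr rfl fun m _ => ?_
          rw [Finset.sum_mul]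
          refine Fintype.sum_equiv (Equiv.subRight m) _ _ fun n => ?_
          rw [← AddChar.map_add_eq_mul, ← AddChar.map_add_eq_mul]
          congr 1
          simp only [Equiv.subRight_apply, hq]
          ring
      _ = ∑ d : ZMod N, ψ (a * d ^ 2 + b * d) * ∑ m : ZMod N, ψ (m * (2 * a * d)) := by
          rw [Finset.sum_comm]
          exact Finset.sum_congr rfl fun d _ => by rw [Finset.mul_sum]
      _ = (N : ℂ) := by
          rw [Finset.sum_eq_single 0]
          · simp [ZMod.card]
          · intro d _ hd
            rw [AddChar.sum_mulShift _ (ZMod.isPrimitive_stdAddChar N),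
              if_neg (mul_ne_zero (mul_ne_zero h2 ha) hd)]
            simp
          · simp
  have hns : Complex.normSq S = N := by
    have : ((Complex.normSq S : ℂ)) = (N : ℂ) := by rw [← Complex.mul_conj]; exact key
    exact_mod_cast this
  rw [Complex.norm_def, hns]

lemma val_sub_cast {N : ℕ} [NeZero N] (a b : Fin N) :
    (((a - b : Fin N) : ℕ) : ZMod N) = ((a : ℕ) : ZMod N) - ((b : ℕ) : ZMod N) := by
  rw [Fin.sub_def]
  push_cast [ZMod.natCast_mod, Nat.cast_sub b.isLt.le]
  simp
  ring

lemma exp_eq_psi {N : ℕ} [NeZero N] (n : ℕ) :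
    Complex.exp (2 * Real.pi * Complex.I * n / N) = stdAddChar ((n : ZMod N)) := by
  have := ZMod.stdAddChar_coe (N := N) (n : ℤ)
  push_cast at this ⊢
  rw [this]

noncomputable def finZmodEquiv (N : ℕ) [NeZero N] : Fin N ≃ ZMod N where
  toFun i := ((i : ℕ) : ZMod N)
  invFun x := ⟨x.val, x.val_lt⟩
  left_inv i := by
    ext
    simp [ZMod.val_natCast_of_lt i.isLt]
  right_inv x := by simp [ZMod.natCast_zmod_val]

lemma T_pow_mulVec {N : ℕ} [NeZero N] (T : Matrix (Fin N) (Fin N) ℂ)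
    (hT : T = fun i j => if i = j + 1 then 1 else 0) (m : ℕ) (g : Fin N → ℂ) :
    (T ^ m).mulVec g = fun i => g (i - (m : Fin N)) := by
  induction m with
  | zero => simp [Matrix.one_mulVec]
  | succ m ih =>
    rw [pow_succ', ← Matrix.mulVec_mulVec, ih]
    funext i
    have hstep : ∀ h : Fin N → ℂ, T.mulVec h i = h (i - 1) := by
      intro h
      simp only [hT, Matrix.mulVec, dotProduct]
      rw [Finset.sum_congr rfl fun j _ => by
        rw [show (if i = j + 1 then (1:ℂ) else 0) = (if i - 1 = j then (1:ℂ) else 0) by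
          congr 1
          simp only [eq_iff_iff, sub_eq_iff_eq_add]]]
      simp [Finset.sum_ite_eq]
    rw [hstep]
    congr 1
    push_cast
    rw [sub_sub, add_comm]

end Aux

/-- For the Alltop sequence (`N ≥ 5` prime), for any nonzero cyclic shift `k` and any
modulation `j`, `|⟨f, M^j T^k f⟩| = 1/√N`. -/
theorem alltop_self_vs_shift (N : ℕ) [NeZero N] (hp : N.Prime) (hN : 5 ≤ N)
    (T : Matrix (Fin N) (Fin N) ℂ)
    (hT : T = fun i j => if i = j + 1 then 1 else 0)
    (M : Matrix (Fin N) (Fin N) ℂ)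
    (hM : M = Matrix.diagonal fun m : Fin N =>
      Complex.exp (2 * Real.pi * Complex.I * (m : ℕ) / N))
    (f : EuclideanSpace ℂ (Fin N))
    (hf : f = fun n : Fin N => (1 / Real.sqrt N : ℝ) *
      Complex.exp (2 * Real.pi * Complex.I * ((n : ℕ) ^ 3) / N))
    (k : Fin N) (hk : k ≠ 0) (j : Fin N) :
    ‖(inner ℂ f (show EuclideanSpace ℂ (Fin N) from
        WithLp.toLp 2 ((M ^ (j : ℕ) * T ^ (k : ℕ)).mulVec f)) : ℂ)‖ = 1 / Real.sqrt N := by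
  haveI : Fact N.Prime := ⟨hp⟩
  set ψ : AddChar (ZMod N) ℂ := ZMod.stdAddChar with hψ
  set κ : ZMod N := ((k : ℕ) : ZMod N) with hκ
  set J : ZMod N := ((j : ℕ) : ZMod N) with hJ
  set c : ℝ := 1 / Real.sqrt N with hc
  -- f in terms of ψ
  have hfi : ∀ i : Fin N, f i = (c : ℂ) * ψ (((i : ℕ) : ZMod N) ^ 3) := by
    intro i
    rw [hf]
    simp only
    congr 1
    rw [show (((i:ℕ):ℂ)^3) = (((i:ℕ)^3 : ℕ) : ℂ) by push_cast; ring, exp_eq_psi]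
    push_cast
    rfl
  -- the shifted vector
  have hw : ((M ^ (j : ℕ) * T ^ (k : ℕ)).mulVec f) =
      fun i : Fin N => ψ (J * ((i : ℕ) : ZMod N)) * f (i - k) := by
    rw [← Matrix.mulVec_mulVec, T_pow_mulVec T hT]
    funext i
    rw [hM, Matrix.diagonal_pow, Matrix.mulVec_diagonal]
    congr 1
    · rw [Pi.pow_apply, exp_eq_psi, ← AddChar.map_nsmul_eq_pow, nsmul_eq_mul, hJ]
    · rw [Fin.cast_val_eq_self]
  -- termwise
  have hterm : ∀ i : Fin N,
      (starRingEnd ℂ) (f i) * (ψ (J * ((i : ℕ) : ZMod N)) * f (i - k)) =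
      ((c : ℂ))^2 * ψ (-(((i : ℕ) : ZMod N) ^ 3) + J * ((i : ℕ) : ZMod N)
        + (((i : ℕ) : ZMod N) - κ) ^ 3) := by
    intro i
    rw [hfi i, hfi (i - k), _root_.map_mul, Complex.conj_ofReal, conj_stdAddChar',
      val_sub_cast, ← hκ]
    rw [AddChar.map_add_eq_mul, AddChar.map_add_eq_mul, ← hψ]
    ring
  -- the inner product as a sum over ZMod N
  have hinner : (inner ℂ f (show EuclideanSpace ℂ (Fin N) from
        WithLp.toLp 2 ((M ^ (j : ℕ) * T ^ (k : ℕ)).mulVec f)) : ℂ) =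
      ((c:ℂ))^2 * ∑ x : ZMod N, ψ (-(x ^ 3) + J * x + (x - κ) ^ 3) := by
    rw [PiLp.inner_apply]
    simp only [RCLike.inner_apply]
    rw [hw, Finset.mul_sum]
    refine Fintype.sum_equiv (finZmodEquiv N) _ _ fun i => ?_
    beta_reduce
    rw [mul_comm _ ((starRingEnd ℂ) _), hterm i]
    rfl
  rw [hinner, norm_mul]
  have hsum : ‖∑ x : ZMod N, ψ (-(x ^ 3) + J * x + (x - κ) ^ 3)‖ = Real.sqrt N := by
    rw [Finset.sum_congr rfl fun x _ => by
      rw [show -(x ^ 3) + J * x + (x - κ) ^ 3 =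
        (-(3 * κ)) * x ^ 2 + (3 * κ ^ 2 + J) * x + (-(κ ^ 3)) by ring]]
    refine gauss_abs' hp hN _ _ _ ?_
    rw [neg_ne_zero]
    refine mul_ne_zero ?_ ?_
    · intro h
      have h3 : N ∣ 3 := by
        rwa [show (3 : ZMod N) = ((3 : ℕ) : ZMod N) by push_cast; rfl,
          ZMod.natCast_eq_zero_iff] at h
      have := Nat.le_of_dvd (by norm_num) h3
      omega
    · intro h
      rw [hκ, ZMod.natCast_eq_zero_iff] at h
      have hlt := k.isLt
      have : (k : ℕ) = 0 := Nat.eq_zero_of_dvd_of_lt h hlt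
      exact hk (Fin.ext this)
  rw [hsum]
  have hs : (0:ℝ) < Real.sqrt N := Real.sqrt_pos.mpr (by positivity)
  have hss : Real.sqrt N * Real.sqrt N = N := Real.mul_self_sqrt (Nat.cast_nonneg N)
  have : ‖((c:ℂ))^2‖ = c^2 := by
    rw [norm_pow, Complex.norm_real, Real.norm_eq_abs, _root_.abs_of_nonneg (by positivity)]
  rw [this, hc]
  field_simp
end

section
/- Uniqueness of sparse representation for incoherent dictionaries: if Φ ∈ ℂ^{N×M} has unit-norm columns and coherence μ, and s, s' are both K-sparse with K < (1/2)(1/μ + 1) and Φs = Φs', then s = s'. -/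
open Complex

/-- Uniqueness of sparse representation for incoherent dictionaries: if `Φ` has unit-norm
columns and coherence at most `μ`, and `s, s'` are `K`-sparse with `K < (1/μ + 1)/2`
and `Φs = Φs'`, then `s = s'`. -/
theorem sparse_representation_unique (N M : ℕ) (Φ : Matrix (Fin N) (Fin M) ℂ)
    (hcol : ∀ j : Fin M, ∑ i, ‖Φ i j‖ ^ 2 = 1)
    (μ : ℝ) (hμpos : 0 < μ)
    (hμ : ∀ j j' : Fin M, j ≠ j' →
      ‖∑ i, (starRingEnd ℂ) (Φ i j) * Φ i j'‖ ≤ μ)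
    (K : ℕ) (hK : (K : ℝ) < (1 / μ + 1) / 2)
    (s s' : Fin M → ℂ)
    (hs : (Finset.univ.filter fun j => s j ≠ 0).card ≤ K)
    (hs' : (Finset.univ.filter fun j => s' j ≠ 0).card ≤ K)
    (h : Φ.mulVec s = Φ.mulVec s') : s = s' := by
  by_contra hne
  set x : Fin M → ℂ := s - s' with hxdef
  have hxne : x ≠ 0 := sub_ne_zero.mpr hne
  have hΦx : Φ.mulVec x = 0 := by
    rw [hxdef, Matrix.mulVec_sub, h, sub_self]
  set T := Finset.univ.filter (fun j => x j ≠ 0) with hTdef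
  have hTne : T.Nonempty := by
    obtain ⟨j, hj⟩ := Function.ne_iff.mp hxne
    exact ⟨j, Finset.mem_filter.mpr ⟨Finset.mem_univ j, by simpa using hj⟩⟩
  have hTcard : (T.card : ℝ) ≤ 2 * K := by
    have hsub : T ⊆ (Finset.univ.filter fun j => s j ≠ 0) ∪
        (Finset.univ.filter fun j => s' j ≠ 0) := by
      intro j hj
      simp only [hTdef, Finset.mem_filter, Finset.mem_union, Finset.mem_univ, true_and] at hj ⊢
      by_contra hc
      push_neg at hc
      exact hj (by rw [hxdef]; simp [hc.1, hc.2])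
    have h1 := Finset.card_le_card hsub
    have h2 := Finset.card_union_le (Finset.univ.filter fun j => s j ≠ 0)
      (Finset.univ.filter fun j => s' j ≠ 0)
    have : T.card ≤ 2 * K := by omega
    exact_mod_cast this
  obtain ⟨j₀, hj₀T, hj₀max⟩ := T.exists_max_image (fun j => ‖x j‖) hTne
  have hxj₀ : x j₀ ≠ 0 := by
    have := Finset.mem_filter.mp hj₀T
    exact this.2
  have hxj₀pos : 0 < ‖x j₀‖ := norm_pos_iff.mpr hxj₀
  -- key: Gram equation
  have key : ∑ j, (∑ i, (starRingEnd ℂ) (Φ i j₀) * Φ i j) * x j = 0 := by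
    have h0 : ∑ i, (starRingEnd ℂ) (Φ i j₀) * (Φ.mulVec x i) = 0 := by
      simp [hΦx]
    calc ∑ j, (∑ i, (starRingEnd ℂ) (Φ i j₀) * Φ i j) * x j
        = ∑ i, (starRingEnd ℂ) (Φ i j₀) * (Φ.mulVec x i) := by
          simp only [Matrix.mulVec, dotProduct, Finset.mul_sum, Finset.sum_mul]
          rw [Finset.sum_comm]
          exact Finset.sum_congr rfl fun i _ => Finset.sum_congr rfl fun j _ => by ring
      _ = 0 := h0
  have diag : ∑ i, (starRingEnd ℂ) (Φ i j₀) * Φ i j₀ = 1 := by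
    have heach : ∀ i, (starRingEnd ℂ) (Φ i j₀) * Φ i j₀ = ((‖Φ i j₀‖ ^ 2 : ℝ) : ℂ) := by
      intro i
      rw [mul_comm, Complex.mul_conj, Complex.normSq_eq_norm_sq]
    rw [Finset.sum_congr rfl fun i _ => heach i]
    rw [← Complex.ofReal_sum, hcol j₀, Complex.ofReal_one]
  -- split off j₀
  have hsplit : x j₀ + ∑ j ∈ Finset.univ.erase j₀,
      (∑ i, (starRingEnd ℂ) (Φ i j₀) * Φ i j) * x j = 0 := by
    have hsum := Finset.add_sum_erase Finset.univ
      (fun j => (∑ i, (starRingEnd ℂ) (Φ i j₀) * Φ i j) * x j) (Finset.mem_univ j₀)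
    beta_reduce at hsum
    rw [← key, ← hsum, diag, one_mul]
  have hxj₀eq : x j₀ = -∑ j ∈ Finset.univ.erase j₀,
      (∑ i, (starRingEnd ℂ) (Φ i j₀) * Φ i j) * x j := by linear_combination hsplit
  -- bound the norm
  have hbound : ‖x j₀‖ ≤ ((T.card : ℝ) - 1) * (μ * ‖x j₀‖) := by
    have hrestrict : ∑ j ∈ Finset.univ.erase j₀,
        (∑ i, (starRingEnd ℂ) (Φ i j₀) * Φ i j) * x j
        = ∑ j ∈ T.erase j₀, (∑ i, (starRingEnd ℂ) (Φ i j₀) * Φ i j) * x j := by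
      refine (Finset.sum_subset ?_ ?_).symm
      · exact Finset.erase_subset_erase _ (Finset.filter_subset _ _)
      · intro j hj hjn
        have hjne : j ≠ j₀ := Finset.ne_of_mem_erase hj
        have : x j = 0 := by
          by_contra hc
          exact hjn (Finset.mem_erase.mpr ⟨hjne, Finset.mem_filter.mpr ⟨Finset.mem_univ j, hc⟩⟩)
        simp [this]
    calc ‖x j₀‖ = ‖∑ j ∈ T.erase j₀, (∑ i, (starRingEnd ℂ) (Φ i j₀) * Φ i j) * x j‖ := by
          rw [hxj₀eq, hrestrict, norm_neg]
      _ ≤ ∑ j ∈ T.erase j₀, ‖(∑ i, (starRingEnd ℂ) (Φ i j₀) * Φ i j) * x j‖ :=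
          norm_sum_le _ _
      _ ≤ ∑ j ∈ T.erase j₀, μ * ‖x j₀‖ := by
          refine Finset.sum_le_sum fun j hj => ?_
          have hjne : j ≠ j₀ := Finset.ne_of_mem_erase hj
          have hjT : j ∈ T := Finset.mem_of_mem_erase hj
          rw [norm_mul]
          exact mul_le_mul (hμ j₀ j (Ne.symm hjne)) (hj₀max j hjT) (norm_nonneg _) hμpos.le
      _ = ((T.erase j₀).card : ℝ) * (μ * ‖x j₀‖) := by
          rw [Finset.sum_const, nsmul_eq_mul]
      _ = ((T.card : ℝ) - 1) * (μ * ‖x j₀‖) := by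
          rw [Finset.card_erase_of_mem hj₀T]
          have h1 : 1 ≤ T.card := Finset.card_pos.mpr hTne
          have : ((T.card - 1 : ℕ) : ℝ) = (T.card : ℝ) - 1 := by
            push_cast [Nat.cast_sub h1]; ring
          rw [this]
  -- contradiction
  have hlt : ((T.card : ℝ) - 1) * μ < 1 := by
    have h2K : (2 * K : ℝ) < 1 / μ + 1 := by linarith
    have : (T.card : ℝ) - 1 < 1 / μ := by linarith
    calc ((T.card : ℝ) - 1) * μ < (1 / μ) * μ := by
          apply mul_lt_mul_of_pos_right this hμpos
      _ = 1 := by field_simp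
  nlinarith [hbound, hxj₀pos, hlt]
end

section
/- Spark lower bound from coherence: for a dictionary Φ with unit-norm columns and coherence μ, any set of columns of size at most 1/μ is linearly independent; hence every nonzero vector in the kernel of Φ has more than 1/μ nonzero entries. -/
open Complex

/-- Spark lower bound from coherence: any set of at most `1/μ` columns of a unit-norm
dictionary with coherence `μ` is linearly independent; hence any nonzero kernel vector
has more than `1/μ` nonzero entries. -/
theorem spark_lower_bound (N M : ℕ) (Φ : Matrix (Fin N) (Fin M) ℂ)
    (hcol : ∀ j : Fin M, ∑ i, ‖Φ i j‖ ^ 2 = 1)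
    (μ : ℝ) (hμpos : 0 < μ)
    (hμ : ∀ j j' : Fin M, j ≠ j' →
      ‖∑ i, (starRingEnd ℂ) (Φ i j) * Φ i j'‖ ≤ μ) :
    (∀ S : Finset (Fin M), (S.card : ℝ) ≤ 1 / μ →
        LinearIndependent ℂ (fun j : S => fun i => Φ i j)) ∧
      ∀ v : Fin M → ℂ, v ≠ 0 → Φ.mulVec v = 0 →
        1 / μ < ((Finset.univ.filter fun j => v j ≠ 0).card : ℝ) := by
  have core : ∀ v : Fin M → ℂ, v ≠ 0 → Φ.mulVec v = 0 →
      1 / μ < ((Finset.univ.filter fun j => v j ≠ 0).card : ℝ) := by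
    intro v hv hΦv
    set S : Finset (Fin M) := Finset.univ.filter fun j => v j ≠ 0 with hS
    have hmemS : ∀ j : Fin M, j ∈ S ↔ v j ≠ 0 := by
      intro j; simp [hS]
    have hSne : S.Nonempty := by
      obtain ⟨j, hj⟩ := Function.ne_iff.mp hv
      exact ⟨j, (hmemS j).mpr hj⟩
    obtain ⟨j0, hj0S, hmax⟩ := S.exists_max_image (fun j => ‖v j‖) hSne
    have hvj0 : v j0 ≠ 0 := (hmemS j0).mp hj0S
    have hvj0pos : 0 < ‖v j0‖ := norm_pos_iff.mpr hvj0
    set G : Fin M → ℂ := fun j => ∑ i, (starRingEnd ℂ) (Φ i j0) * Φ i j with hG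
    have hsum : ∑ j, G j * v j = 0 := by
      have h0 : ∑ i, (starRingEnd ℂ) (Φ i j0) * Φ.mulVec v i = 0 := by
        simp [hΦv]
      rw [← h0]
      simp only [Matrix.mulVec, dotProduct, Finset.mul_sum, hG, Finset.sum_mul]
      rw [Finset.sum_comm]
      refine Finset.sum_congr rfl fun j _ => Finset.sum_congr rfl fun i _ => by ring
    have hGj0 : G j0 = 1 := by
      have h1 : G j0 = ((∑ i, ‖Φ i j0‖ ^ 2 : ℝ) : ℂ) := by
        rw [hG]
        push_cast
        exact Finset.sum_congr rfl fun i _ => RCLike.conj_mul (Φ i j0)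
      rw [h1, hcol j0]; norm_num
    have hsplit : v j0 + ∑ j ∈ Finset.univ.erase j0, G j * v j = 0 := by
      rw [← hsum, ← Finset.add_sum_erase _ _ (Finset.mem_univ j0), hGj0, one_mul]
    have hrestrict : ∑ j ∈ Finset.univ.erase j0, G j * v j
        = ∑ j ∈ S.erase j0, G j * v j := by
      refine (Finset.sum_subset (fun j hj => ?_) (fun j _ hjS => ?_)).symm
      · exact Finset.mem_erase.mpr ⟨(Finset.mem_erase.mp hj).1, Finset.mem_univ j⟩
      · have hj0' : j ≠ j0 := (Finset.mem_erase.mp ‹j ∈ Finset.univ.erase j0›).1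
        have : v j = 0 := by
          by_contra h
          exact hjS (Finset.mem_erase.mpr ⟨hj0', (hmemS j).mpr h⟩)
        simp [this]
    have hkey : ‖v j0‖ ≤ ((S.erase j0).card : ℝ) * (μ * ‖v j0‖) := by
      have hveq : v j0 = -∑ j ∈ S.erase j0, G j * v j := by
        rw [← hrestrict]; linear_combination hsplit
      calc ‖v j0‖ = ‖∑ j ∈ S.erase j0, G j * v j‖ := by rw [hveq, norm_neg]
        _ ≤ ∑ j ∈ S.erase j0, ‖G j * v j‖ := norm_sum_le _ _
        _ ≤ ∑ _j ∈ S.erase j0, μ * ‖v j0‖ := by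
            refine Finset.sum_le_sum fun j hj => ?_
            rw [norm_mul]
            have hjne : j0 ≠ j := fun h => (Finset.mem_erase.mp hj).1 h.symm
            have hGle : ‖G j‖ ≤ μ := hμ j0 j hjne
            have hvle : ‖v j‖ ≤ ‖v j0‖ := hmax j (Finset.mem_of_mem_erase hj)
            exact mul_le_mul hGle hvle (norm_nonneg _) (le_of_lt hμpos)
        _ = ((S.erase j0).card : ℝ) * (μ * ‖v j0‖) := by
            rw [Finset.sum_const, nsmul_eq_mul]
    have hcard : 1 ≤ ((S.erase j0).card : ℝ) * μ := by
      have := hkey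
      rw [← mul_assoc] at this
      have h2 : 1 * ‖v j0‖ ≤ ((S.erase j0).card : ℝ) * μ * ‖v j0‖ := by
        rwa [one_mul]
      exact le_of_mul_le_mul_right h2 hvj0pos
    have herase : ((S.erase j0).card : ℝ) < (S.card : ℝ) := by
      exact_mod_cast Finset.card_erase_lt_of_mem hj0S
    calc 1 / μ ≤ ((S.erase j0).card : ℝ) := by
          rw [div_le_iff₀ hμpos]; linarith
      _ < (S.card : ℝ) := herase
  refine ⟨?_, core⟩
  intro S hScard
  rw [Fintype.linearIndependent_iff]
  intro g hg
  by_contra hgj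
  push_neg at hgj
  obtain ⟨j1, hj1⟩ := hgj
  set v : Fin M → ℂ := fun j => if h : j ∈ S then g ⟨j, h⟩ else 0 with hv
  have hvS : ∀ j : S, v (j : Fin M) = g j := by
    intro j; simp [hv, j.prop]
  have hvne : v ≠ 0 := by
    intro h
    apply hj1
    rw [← hvS j1, h, Pi.zero_apply]
  have hΦv : Φ.mulVec v = 0 := by
    funext i
    have hgi : ∑ j : S, g j * Φ i (j : Fin M) = 0 := by
      have := congrFun hg i
      simpa [Finset.sum_apply] using this
    have : Φ.mulVec v i = ∑ j : S, g j * Φ i (j : Fin M) := by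
      simp only [Matrix.mulVec, dotProduct]
      rw [← Finset.sum_subset (Finset.subset_univ S)
        (fun j _ hjS => by simp [hv, hjS])]
      rw [← Finset.sum_coe_sort S (fun j => Φ i j * v j)]
      exact Finset.sum_congr rfl fun j _ => by rw [hvS j, mul_comm]
    rw [this, hgi]; rfl
  have hsupp : (Finset.univ.filter fun j => v j ≠ 0) ⊆ S := by
    intro j hj
    rw [Finset.mem_filter] at hj
    by_contra hjS
    exact hj.2 (by simp [hv, hjS])
  have := core v hvne hΦv
  have hle : ((Finset.univ.filter fun j => v j ≠ 0).card : ℝ) ≤ (S.card : ℝ) :=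
    Nat.cast_le.mpr (Finset.card_le_card hsupp)
  linarith
end
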